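/- Let H be a signed graph such that |E_N(H)| ≥ 2 and H − E_N(H) is a spanning tree of H. If |E_N(H)| is even, then H has a subgraph which is a generalized barbell and which contains all edges of B_g(H) ∪ (∪_{e ∈ E_N(H)} S_H(e)). -/

import Mathlib

open scoped Classical

noncomputable section

/-- A signed (multi)graph: a finite multigraph (loops and multiple edges allowed)
together with a sign on each edge (`neg e = true` means `e` is negative). -/
structure SignedMultigraph where
  V : Type
  E : Type
  [fintypeV : Fintype V]
  [fintypeE : Fintype E]
  ends : E → Sym2 V
  neg : E → Bool

attribute [instance] SignedMultigraph.fintypeV SignedMultigraph.fintypeE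

namespace SignedMultigraph

variable (G : SignedMultigraph)

/-- The vertices incident with at least one edge of `S`. -/
def support (S : Finset G.E) : Finset G.V :=
  Finset.univ.filter fun v => ∃ e ∈ S, v ∈ G.ends e

/-- Degree of `v` in the edge set `S`; loops count twice. -/
def degIn (S : Finset G.E) (v : G.V) : ℕ :=
  ∑ e ∈ S, (if G.ends e = Sym2.diag v then 2 else if v ∈ G.ends e then 1 else 0)

/-- `u` and `v` are joined by an edge of `S`. -/
def Adj (S : Finset G.E) (u v : G.V) : Prop := ∃ e ∈ S, G.ends e = s(u, v)

/-- Reachability using only edges of `S`. -/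
def Reach (S : Finset G.E) : G.V → G.V → Prop := Relation.ReflTransGen (G.Adj S)

/-- The subgraph with edge set `S` (and vertex set its support) is connected. -/
def ConnOn (S : Finset G.E) : Prop :=
  ∀ u ∈ G.support S, ∀ v ∈ G.support S, G.Reach S u v

/-- The whole signed graph is connected. -/
def Connected : Prop := Nonempty G.V ∧ ∀ u v : G.V, G.Reach Finset.univ u v

/-- The negative edges among `S`. -/
def negEdges (S : Finset G.E) : Finset G.E := S.filter fun e => G.neg e = true

/-- A circuit: a (nonempty) connected 2-regular subgraph, given by its edge set. -/
def IsCircuit (S : Finset G.E) : Prop :=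
  S.Nonempty ∧ G.ConnOn S ∧ ∀ v ∈ G.support S, G.degIn S v = 2

/-- A balanced circuit: a circuit with an even number of negative edges. -/
def IsBalancedCircuit (S : Finset G.E) : Prop :=
  G.IsCircuit S ∧ Even (G.negEdges S).card

/-- An unbalanced circuit: a circuit with an odd number of negative edges. -/
def IsUnbalancedCircuit (S : Finset G.E) : Prop :=
  G.IsCircuit S ∧ ¬ Even (G.negEdges S).card

/-- A short barbell: two unbalanced circuits meeting at exactly one vertex. -/
def IsShortBarbell (S : Finset G.E) : Prop :=
  ∃ C₁ C₂ : Finset G.E, G.IsUnbalancedCircuit C₁ ∧ G.IsUnbalancedCircuit C₂ ∧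
    Disjoint C₁ C₂ ∧ (G.support C₁ ∩ G.support C₂).card = 1 ∧ S = C₁ ∪ C₂

/-- A path with (distinct) ends `u` and `v`, given by its edge set. -/
def IsPath (P : Finset G.E) (u v : G.V) : Prop :=
  P.Nonempty ∧ G.ConnOn P ∧ u ≠ v ∧ u ∈ G.support P ∧ v ∈ G.support P ∧
    G.degIn P u = 1 ∧ G.degIn P v = 1 ∧
    ∀ w ∈ G.support P, w ≠ u → w ≠ v → G.degIn P w = 2

/-- A long barbell: two vertex-disjoint unbalanced circuits joined by a path
meeting the circuits only at its ends. -/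
def IsLongBarbell (S : Finset G.E) : Prop :=
  ∃ (C₁ C₂ P : Finset G.E) (u v : G.V),
    G.IsUnbalancedCircuit C₁ ∧ G.IsUnbalancedCircuit C₂ ∧
    Disjoint (G.support C₁) (G.support C₂) ∧
    G.IsPath P u v ∧
    G.support P ∩ G.support C₁ = {u} ∧ G.support P ∩ G.support C₂ = {v} ∧
    Disjoint P C₁ ∧ Disjoint P C₂ ∧
    S = C₁ ∪ C₂ ∪ P

/-- A signed circuit: a balanced circuit, a short barbell, or a long barbell. -/
def IsSignedCircuit (S : Finset G.E) : Prop :=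
  G.IsBalancedCircuit S ∨ G.IsShortBarbell S ∨ G.IsLongBarbell S

/-- The number of members of the family `F` containing the edge `e`. -/
def coverCount (F : Multiset (Finset G.E)) (e : G.E) : ℕ :=
  (F.filter fun S => e ∈ S).card

/-- The total length of the family `F`. -/
def coverLength (F : Multiset (Finset G.E)) : ℕ := (F.map Finset.card).sum

/-- A signed circuit cover: every edge is in at least one member. -/
def IsSignedCircuitCover (F : Multiset (Finset G.E)) : Prop :=
  (∀ S ∈ F, G.IsSignedCircuit S) ∧ ∀ e : G.E, 1 ≤ G.coverCount F e

/-- The length of a shortest signed circuit cover. -/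
def SCC : ℕ := sInf { n | ∃ F, G.IsSignedCircuitCover F ∧ G.coverLength F = n }

/-- Whether edge `e` has exactly one endpoint in the vertex set `A`. -/
def crossesB (A : Finset G.V) (e : G.E) : Bool :=
  Sym2.lift ⟨fun x y => Bool.xor (decide (x ∈ A)) (decide (y ∈ A)),
    fun x y => Bool.xor_comm _ _⟩ (G.ends e)

/-- Sign of `e` (`true` = negative) after switching at every vertex of `A`. -/
def negAfter (A : Finset G.V) (e : G.E) : Bool :=
  Bool.xor (G.neg e) (G.crossesB A e)

/-- Minimum number of negative edges in `S` over all switchings. -/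
def negOf (S : Finset G.E) : ℕ :=
  sInf { n | ∃ A : Finset G.V, (S.filter fun e => G.negAfter A e = true).card = n }

/-- The negativeness of `G`. -/
def negativeness : ℕ := G.negOf Finset.univ

/-- The edges of `S` with exactly one endpoint in `U`: the edge boundary `δ(U)` inside `S`. -/
def boundary (S : Finset G.E) (U : Finset G.V) : Finset G.E :=
  S.filter fun e => G.crossesB U e = true

/-- `b` is a bridge of the subgraph with edge set `S`. -/
def IsBridge (S : Finset G.E) (b : G.E) : Prop :=
  ∃ U : Finset G.V, G.boundary S U = {b}

/-- The subgraph with edge set `S` is bridgeless. -/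
def Bridgeless (S : Finset G.E) : Prop := ∀ b ∈ S, ¬ G.IsBridge S b

/-- `G` is 2-edge-connected. -/
def TwoEdgeConnected : Prop :=
  G.Connected ∧ ∀ b : G.E, ¬ G.IsBridge Finset.univ b

/-- Edges of `S` lying in the same component (of the subgraph with edge set `S`)
as the vertex `x`. -/
def compEdges (S : Finset G.E) (x : G.V) : Finset G.E :=
  S.filter fun e => ∃ u, u ∈ G.ends e ∧ G.Reach S x u

/-- A g-bridge: a bridge such that both components of `G - b` have even negativeness. -/
def IsGBridge (b : G.E) : Prop :=
  G.IsBridge Finset.univ b ∧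
    ∃ x y : G.V, G.ends b = s(x, y) ∧
      Even (G.negOf (G.compEdges (Finset.univ.erase b) x)) ∧
      Even (G.negOf (G.compEdges (Finset.univ.erase b) y))

/-- `G` has no g-bridge (in any of its components). -/
def GBridgeless : Prop := ∀ b : G.E, ¬ G.IsGBridge b

/-- Member of `B_g(G)`: a bridge such that at least one component of `G - b`
contains an odd number of negative edges. -/
def IsBgBridge (b : G.E) : Prop :=
  G.IsBridge Finset.univ b ∧
    ∃ x : G.V, x ∈ G.ends b ∧
      ¬ Even (G.negEdges (G.compEdges (Finset.univ.erase b) x)).card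

/-- Member of `B_s(G)`: a bridge such that each of the two components of `G - b`
contains a negative edge. -/
def IsSBridge (b : G.E) : Prop :=
  G.IsBridge Finset.univ b ∧
    ∃ x y : G.V, G.ends b = s(x, y) ∧
      (G.negEdges (G.compEdges (Finset.univ.erase b) x)).Nonempty ∧
      (G.negEdges (G.compEdges (Finset.univ.erase b) y)).Nonempty

/-- `G` is s-bridgeless: every edge lies in some signed circuit. -/
def SBridgeless : Prop := ∀ e : G.E, ∃ S : Finset G.E, G.IsSignedCircuit S ∧ e ∈ S

/-- `{e, f}` is a 2-edge-cut of `G`. -/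
def IsTwoEdgeCut (e f : G.E) : Prop :=
  e ≠ f ∧ ∃ U : Finset G.V, G.boundary Finset.univ U = {e, f}

/-- `S_G(e) = {e} ∪ {f : {e,f} is a 2-edge-cut of G}`. -/
def SSet (e : G.E) : Finset G.E :=
  insert e (Finset.univ.filter fun f => G.IsTwoEdgeCut e f)

/-- The edge set `R` spans an acyclic subgraph (every nonempty subset has a
vertex of degree one). -/
def AcyclicSet (R : Finset G.E) : Prop :=
  ∀ F ⊆ R, F.Nonempty → ∃ v : G.V, G.degIn F v = 1

/-- `T` is the edge set of a spanning tree of `G`. -/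
def IsSpanningTree (T : Finset G.E) : Prop :=
  G.AcyclicSet T ∧ Nonempty G.V ∧ ∀ u v : G.V, G.Reach T u v

/-- `G` is eulerian: connected with all degrees even. -/
def Eulerian : Prop :=
  G.Connected ∧ ∀ v : G.V, Even (G.degIn Finset.univ v)

/-- The edge set `S` spans an eulerian subgraph. -/
def IsEulerianSub (S : Finset G.E) : Prop :=
  S.Nonempty ∧ G.ConnOn S ∧ ∀ v ∈ G.support S, Even (G.degIn S v)

/-- The vertex class of `v` after contracting each member of `ℬ`. -/
def classOf (ℬ : Finset (Finset G.E)) (v : G.V) : Finset G.V :=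
  Finset.univ.filter fun u => u = v ∨ ∃ B ∈ ℬ, v ∈ G.support B ∧ u ∈ G.support B

/-- Degree, in edge set `F`, of the contracted class of `v`. -/
def classDeg (ℬ : Finset (Finset G.E)) (F : Finset G.E) (v : G.V) : ℕ :=
  ∑ u ∈ G.classOf ℬ v, G.degIn F u

/-- `ℬ` witnesses that the subgraph with edge set `S` is a generalized barbell:
`ℬ` is a family of vertex-disjoint eulerian subgraphs of `S`, the contraction
`S/(∪ℬ)` is acyclic, and for every vertex `x` of the contracted graph,
`|E_N(B_x)| ≡ |δ(V(B_x))| (mod 2)`. -/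
def GenBarbellWitness (S : Finset G.E) (ℬ : Finset (Finset G.E)) : Prop :=
  (∀ B ∈ ℬ, B ⊆ S ∧ G.IsEulerianSub B) ∧
  (∀ B₁ ∈ ℬ, ∀ B₂ ∈ ℬ, B₁ ≠ B₂ → Disjoint (G.support B₁) (G.support B₂)) ∧
  (∀ F ⊆ S \ ℬ.sup id, F.Nonempty → ∃ v : G.V, G.classDeg ℬ F v = 1) ∧
  (∀ B ∈ ℬ, (G.negEdges B).card ≡ (G.boundary S (G.support B)).card [MOD 2]) ∧
  (∀ v ∈ G.support S, (∀ B ∈ ℬ, v ∉ G.support B) → Even (G.boundary S {v}).card)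

/-- The subgraph with edge set `S` is a generalized barbell. -/
def IsGenBarbell (S : Finset G.E) : Prop := ∃ ℬ, G.GenBarbellWitness S ℬ

end SignedMultigraph
namespace SignedMultigraph

/-- 0/1 indicator in `ZMod 2`. -/
def gbChi (p : Prop) : ZMod 2 := if p then 1 else 0

lemma gbChi_self_add (p : Prop) : gbChi p + gbChi p = 0 := by
  unfold gbChi; by_cases h : p <;> simp [h] <;> decide

lemma zmod2_add_self : ∀ x : ZMod 2, x + x = 0 := by decide

lemma gbChi_congr {p q : Prop} (h : p ↔ q) : gbChi p = gbChi q := by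
  unfold gbChi; by_cases hp : p
  · rw [if_pos hp, if_pos (h.mp hp)]
  · rw [if_neg hp, if_neg (fun hq => hp (h.mpr hq))]

variable (G : SignedMultigraph)

lemma gb_exists_ends (e : G.E) : ∃ a b : G.V, G.ends e = s(a, b) := by
  obtain ⟨⟨a, b⟩, h⟩ := Quot.exists_rep (G.ends e)
  exact ⟨a, b, h.symm⟩

/-- indicator that `e` crosses `U`. -/
def gbCInd (U : Finset G.V) (e : G.E) : ZMod 2 := gbChi (G.crossesB U e = true)

lemma gb_cInd_eq {e : G.E} {a b : G.V} (h : G.ends e = s(a, b)) (U : Finset G.V) :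
    G.gbCInd U e = gbChi (a ∈ U) + gbChi (b ∈ U) := by
  unfold gbCInd crossesB
  rw [h, Sym2.lift_mk]
  by_cases ha : a ∈ U <;> by_cases hb : b ∈ U <;>
    simp [gbChi, ha, hb] <;> decide

lemma gb_diag_eq {a b v : G.V} : (s(a, b) : Sym2 G.V) = Sym2.diag v ↔ a = v ∧ b = v := by
  rw [Sym2.diag]
  rw [Sym2.eq_iff]
  tauto

lemma gb_sum_degIn (F : Finset G.E) (U : Finset G.V) :
    ∑ v ∈ U, ((G.degIn F v : ℕ) : ZMod 2) = ∑ e ∈ F, G.gbCInd U e := by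
  unfold degIn
  simp only [Nat.cast_sum]
  rw [Finset.sum_comm]
  refine Finset.sum_congr rfl fun e _ => ?_
  obtain ⟨a, b, h⟩ := G.gb_exists_ends e
  rw [G.gb_cInd_eq h]
  by_cases hab : a = b
  · subst hab
    have : ∀ v ∈ U, ((if G.ends e = Sym2.diag v then (2:ℕ) else
        if v ∈ G.ends e then 1 else 0 : ℕ) : ZMod 2) = 0 := by
      intro v _
      by_cases hd : G.ends e = Sym2.diag v
      · simp [hd]; decide
      · have hv : v ∉ G.ends e := by
          rw [h, Sym2.mem_iff]
          rintro (rfl | rfl) <;> exact hd (by rw [h, G.gb_diag_eq]; exact ⟨rfl, rfl⟩)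
        simp [hd, hv]
    rw [Finset.sum_congr rfl this]
    simp [gbChi_self_add]
  · have hdiag : ∀ v, ¬ (G.ends e = Sym2.diag v) := by
      intro v hd
      rw [h, G.gb_diag_eq] at hd
      exact hab (hd.1.trans hd.2.symm)
    have : ∀ v ∈ U, ((if G.ends e = Sym2.diag v then (2:ℕ) else
        if v ∈ G.ends e then 1 else 0 : ℕ) : ZMod 2)
        = gbChi (v = a) + gbChi (v = b) := by
      intro v _
      rw [if_neg (hdiag v)]
      simp only [h, Sym2.mem_iff]
      unfold gbChi
      by_cases hva : v = a
      · have hvb : ¬ v = b := fun hvb => hab (hva.symm.trans hvb)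
        simp [hva, hvb]
        exact hab
      · by_cases hvb : v = b <;> simp [hva, hvb]
        exact fun hba => hab hba.symm
    rw [Finset.sum_congr rfl this, Finset.sum_add_distrib]
    unfold gbChi
    rw [Finset.sum_ite_eq' U a (fun _ => (1:ZMod 2)), Finset.sum_ite_eq' U b (fun _ => (1:ZMod 2))]
    by_cases ha : a ∈ U <;> by_cases hb : b ∈ U <;> simp [ha, hb]

lemma gb_boundary_card (F : Finset G.E) (U : Finset G.V) :
    (((G.boundary F U).card : ℕ) : ZMod 2) = ∑ e ∈ F, G.gbCInd U e := by
  unfold boundary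
  rw [Finset.card_filter]
  push_cast
  refine Finset.sum_congr rfl fun e _ => ?_
  unfold gbCInd gbChi
  by_cases hc : G.crossesB U e = true <;> simp [hc]

lemma gb_boundary_parity (F : Finset G.E) (U : Finset G.V) :
    (((G.boundary F U).card : ℕ) : ZMod 2) = ∑ v ∈ U, ((G.degIn F v : ℕ) : ZMod 2) := by
  rw [gb_boundary_card, gb_sum_degIn]

lemma gb_degIn_cast (F : Finset G.E) (v : G.V) :
    ((G.degIn F v : ℕ) : ZMod 2) = ∑ e ∈ F, G.gbCInd {v} e := by
  have := G.gb_sum_degIn F {v}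
  rwa [Finset.sum_singleton] at this

lemma gb_sum_symmDiff (A B : Finset G.E) (g : G.E → ZMod 2) :
    ∑ e ∈ symmDiff A B, g e = ∑ e ∈ A, g e + ∑ e ∈ B, g e := by
  classical
  rw [symmDiff_def]
  have hd : Disjoint (A \ B) (B \ A) := by
    exact disjoint_sdiff_sdiff
  rw [Finset.sup_eq_union, Finset.sum_union hd]
  have hA : ∑ e ∈ A, g e = ∑ e ∈ A \ B, g e + ∑ e ∈ A ∩ B, g e := by
    rw [← Finset.sum_union (Finset.disjoint_sdiff_inter A B), Finset.sdiff_union_inter]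
  have hB : ∑ e ∈ B, g e = ∑ e ∈ B \ A, g e + ∑ e ∈ B ∩ A, g e := by
    rw [← Finset.sum_union (Finset.disjoint_sdiff_inter B A), Finset.sdiff_union_inter]
  rw [hA, hB, Finset.inter_comm B A]
  linear_combination -(zmod2_add_self (∑ e ∈ A ∩ B, g e))

lemma gb_degIn_symmDiff (A B : Finset G.E) (v : G.V) :
    ((G.degIn (symmDiff A B) v : ℕ) : ZMod 2)
      = ((G.degIn A v : ℕ) : ZMod 2) + ((G.degIn B v : ℕ) : ZMod 2) := by
  rw [gb_degIn_cast, gb_degIn_cast, gb_degIn_cast, gb_sum_symmDiff]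

lemma gb_adj_symm {S : Finset G.E} {u v : G.V} (h : G.Adj S u v) : G.Adj S v u := by
  obtain ⟨e, he, hee⟩ := h
  exact ⟨e, he, by rw [hee, Sym2.eq_swap]⟩

lemma gb_reach_symm {S : Finset G.E} {u v : G.V} (h : G.Reach S u v) : G.Reach S v u := by
  exact @Std.Symm.symm _ _ (@Relation.ReflTransGen.symmetric _ (G.Adj S) ⟨fun _ _ h => G.gb_adj_symm h⟩) _ _ h

lemma gb_reach_mono {S S' : Finset G.E} (hss : S ⊆ S') {u v : G.V} (h : G.Reach S u v) :
    G.Reach S' u v := by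
  refine Relation.ReflTransGen.mono ?_ _ _ h
  rintro a b ⟨e, he, hee⟩
  exact ⟨e, hss he, hee⟩

lemma gb_reach_cross {S : Finset G.E} {U : Finset G.V} {x y : G.V}
    (h : G.Reach S x y) (hx : x ∈ U) (hy : y ∉ U) :
    ∃ e ∈ S, G.crossesB U e = true := by
  induction h with
  | refl => exact absurd hx hy
  | tail hr hadj ih =>
    rename_i b c
    obtain ⟨e, heS, hee⟩ := hadj
    by_cases hb : b ∈ U
    · refine ⟨e, heS, ?_⟩
      rw [show G.crossesB U e = Bool.xor (decide (b ∈ U)) (decide (c ∈ U)) by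
        unfold crossesB; rw [hee, Sym2.lift_mk]]
      simp [hb, hy]
    · exact ih hb

lemma gb_path_exists {S : Finset G.E} {a b : G.V} (h : G.Reach S a b) :
    ∃ P, P ⊆ S ∧ ∀ v, ((G.degIn P v : ℕ) : ZMod 2) = gbChi (v = a) + gbChi (v = b) := by
  induction h with
  | refl =>
    refine ⟨∅, Finset.empty_subset _, fun v => ?_⟩
    unfold degIn
    simp [gbChi_self_add]
  | tail hr hadj ih =>
    rename_i c d
    obtain ⟨P, hPS, hP⟩ := ih
    obtain ⟨e, heS, hee⟩ := hadj
    refine ⟨symmDiff P {e}, ?_, fun v => ?_⟩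
    · intro f hf
      have := symmDiff_le_sup (a := P) (b := ({e} : Finset G.E))
      have hf' := this hf
      rw [Finset.sup_eq_union, Finset.mem_union] at hf'
      rcases hf' with h1 | h1
      · exact hPS h1
      · rw [Finset.mem_singleton] at h1; subst h1; exact heS
    · rw [gb_degIn_symmDiff, hP]
      have : ((G.degIn {e} v : ℕ) : ZMod 2) = gbChi (v = c) + gbChi (v = d) := by
        rw [gb_degIn_cast, Finset.sum_singleton, G.gb_cInd_eq hee]
        simp only [Finset.mem_singleton]
        rw [gbChi_congr (show c = v ↔ v = c from eq_comm), gbChi_congr (show d = v ↔ v = d from eq_comm)]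
      rw [this]
      have h1 := gbChi_self_add (v = c)
      calc gbChi (v = a) + gbChi (v = c) + (gbChi (v = c) + gbChi (v = d))
          = gbChi (v = a) + gbChi (v = d) + (gbChi (v = c) + gbChi (v = c)) := by ring
        _ = gbChi (v = a) + gbChi (v = d) := by rw [h1, add_zero]

lemma gb_acyclic_empty {T : Finset G.E} (hT : G.AcyclicSet T) {D : Finset G.E}
    (hD : D ⊆ T) (h0 : ∀ v, ((G.degIn D v : ℕ) : ZMod 2) = 0) : D = ∅ := by
  by_contra hne
  obtain ⟨v, hv⟩ := hT D hD (Finset.nonempty_of_ne_empty hne)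
  have := h0 v
  rw [hv] at this
  exact one_ne_zero this

lemma gb_mem_ends {e : G.E} {a b v : G.V} (h : G.ends e = s(a, b)) :
    v ∈ G.ends e ↔ v = a ∨ v = b := by rw [h, Sym2.mem_iff]

lemma gb_tree_ne {T : Finset G.E} (hT : G.AcyclicSet T) {f : G.E} (hf : f ∈ T)
    {a b : G.V} (h : G.ends f = s(a, b)) : a ≠ b := by
  rintro rfl
  have : ({f} : Finset G.E) = ∅ := by
    refine G.gb_acyclic_empty hT (Finset.singleton_subset_iff.mpr hf) fun v => ?_
    rw [gb_degIn_cast, Finset.sum_singleton, G.gb_cInd_eq h]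
    exact gbChi_self_add _
  simp at this

lemma gb_crossesB_eq {U : Finset G.V} {e : G.E} {a b : G.V} (h : G.ends e = s(a, b)) :
    G.crossesB U e = Bool.xor (decide (a ∈ U)) (decide (b ∈ U)) := by
  unfold crossesB; rw [h, Sym2.lift_mk]

lemma gb_not_cross_both {U : Finset G.V} {e : G.E} {a b : G.V} (h : G.ends e = s(a, b))
    (ha : a ∈ U) (hb : b ∈ U) : ¬ G.crossesB U e = true := by
  rw [G.gb_crossesB_eq h]; simp [ha, hb]

lemma gb_not_cross_neither {U : Finset G.V} {e : G.E} {a b : G.V} (h : G.ends e = s(a, b))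
    (ha : a ∉ U) (hb : b ∉ U) : ¬ G.crossesB U e = true := by
  rw [G.gb_crossesB_eq h]; simp [ha, hb]

lemma gb_cross_endpoints {U : Finset G.V} {e : G.E} {a b : G.V} (h : G.ends e = s(a, b))
    (hc : G.crossesB U e = true) : (a ∈ U ∧ b ∉ U) ∨ (a ∉ U ∧ b ∈ U) := by
  rw [G.gb_crossesB_eq h] at hc
  by_cases ha : a ∈ U <;> by_cases hb : b ∈ U <;> simp [ha, hb] at hc ⊢

lemma gb_cross_compl {U : Finset G.V} {e : G.E} :
    G.crossesB (Finset.univ \ U) e = G.crossesB U e := by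
  obtain ⟨a, b, h⟩ := G.gb_exists_ends e
  rw [G.gb_crossesB_eq h, G.gb_crossesB_eq h]
  by_cases ha : a ∈ U <;> by_cases hb : b ∈ U <;> simp [ha, hb]

lemma gb_cast_eq_zero_iff (n : ℕ) : ((n : ZMod 2) = 0) ↔ Even n := by
  rw [ZMod.natCast_eq_zero_iff]
  exact (even_iff_two_dvd).symm

lemma gb_cast_modeq (m n : ℕ) : ((m : ZMod 2) = (n : ZMod 2)) ↔ m ≡ n [MOD 2] := by
  exact ZMod.natCast_eq_natCast_iff m n 2

/-! ### components -/

lemma gb_mem_negEdges (Sx : Finset G.E) (e : G.E) :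
    e ∈ G.negEdges Sx ↔ e ∈ Sx ∧ G.neg e = true := by
  unfold negEdges; exact Finset.mem_filter

lemma gb_comp_mem {D : Finset G.E} {x : G.V} {e : G.E} :
    e ∈ G.compEdges D x ↔ e ∈ D ∧ ∃ u, u ∈ G.ends e ∧ G.Reach D x u := by
  unfold compEdges; rw [Finset.mem_filter]

lemma gb_mem_support {S : Finset G.E} {v : G.V} :
    v ∈ G.support S ↔ ∃ e ∈ S, v ∈ G.ends e := by
  unfold support; rw [Finset.mem_filter]; simp

lemma gb_adj_of_mem {D : Finset G.E} {e : G.E} {u v : G.V} (he : e ∈ D)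
    (hu : u ∈ G.ends e) (hv : v ∈ G.ends e) (huv : u ≠ v) : G.Adj D u v := by
  obtain ⟨a, b, h⟩ := G.gb_exists_ends e
  rw [G.gb_mem_ends h] at hu hv
  refine ⟨e, he, ?_⟩
  rcases hu with rfl | rfl <;> rcases hv with rfl | rfl
  · exact absurd rfl huv
  · exact h
  · rw [h, Sym2.eq_swap]
  · exact absurd rfl huv

lemma gb_reach_comp {D : Finset G.E} {x u : G.V} (h : G.Reach D x u) :
    G.Reach (G.compEdges D x) x u := by
  induction h with
  | refl => exact Relation.ReflTransGen.refl
  | tail hr hadj ih =>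
    rename_i b c
    obtain ⟨e, he, hee⟩ := hadj
    refine Relation.ReflTransGen.tail ih ⟨e, ?_, hee⟩
    exact G.gb_comp_mem.mpr ⟨he, b, by rw [hee]; exact Sym2.mem_mk_left b c, hr⟩

lemma gb_support_comp {D : Finset G.E} {x v : G.V}
    (hv : v ∈ G.support (G.compEdges D x)) : G.Reach D x v := by
  rw [gb_mem_support] at hv
  obtain ⟨e, he, hve⟩ := hv
  obtain ⟨heD, u, hue, hru⟩ := G.gb_comp_mem.mp he
  by_cases huv : u = v
  · exact huv ▸ hru
  · exact Relation.ReflTransGen.tail hru (G.gb_adj_of_mem heD hue hve huv)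

lemma gb_comp_eq {D : Finset G.E} {x y : G.V} (h : G.Reach D x y) :
    G.compEdges D x = G.compEdges D y := by
  ext e
  rw [gb_comp_mem, gb_comp_mem]
  constructor <;> rintro ⟨heD, u, hue, hru⟩
  · exact ⟨heD, u, hue, (G.gb_reach_symm h).trans hru⟩
  · exact ⟨heD, u, hue, h.trans hru⟩

lemma gb_comp_subset {D : Finset G.E} {x : G.V} : G.compEdges D x ⊆ D :=
  Finset.filter_subset _ _

lemma gb_mem_comp_incident {D : Finset G.E} {x v : G.V} {e : G.E}
    (h : G.Reach D x v) (he : e ∈ D) (hv : v ∈ G.ends e) : e ∈ G.compEdges D x :=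
  G.gb_comp_mem.mpr ⟨he, v, hv, h⟩

lemma gb_degIn_comp {D : Finset G.E} {x v : G.V}
    (hv : v ∈ G.support (G.compEdges D x)) :
    G.degIn (G.compEdges D x) v = G.degIn D v := by
  have hrx : G.Reach D x v := G.gb_support_comp hv
  unfold degIn
  refine (Finset.sum_subset G.gb_comp_subset fun e heD henc => ?_)

  by_contra h0
  have hv' : v ∈ G.ends e := by
    by_cases hd : G.ends e = Sym2.diag v
    · rw [hd, Sym2.diag]
      exact Sym2.mem_mk_left v v
    · by_cases hm : v ∈ G.ends e
      · exact hm
      · simp [hd, hm] at h0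
  exact henc (G.gb_mem_comp_incident hrx heD hv')

lemma gb_comp_support_x {D : Finset G.E} {x : G.V} (hx : x ∈ G.support D) :
    x ∈ G.support (G.compEdges D x) := by
  rw [gb_mem_support] at hx ⊢
  obtain ⟨e, he, hxe⟩ := hx
  exact ⟨e, G.gb_mem_comp_incident Relation.ReflTransGen.refl he hxe, hxe⟩

lemma gb_comp_connOn {D : Finset G.E} {x : G.V} : G.ConnOn (G.compEdges D x) := by
  intro u hu v hv
  have h1 := G.gb_reach_comp (G.gb_support_comp hu)
  have h2 := G.gb_reach_comp (G.gb_support_comp hv)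
  exact (G.gb_reach_symm h1).trans h2

lemma gb_comp_cover {D : Finset G.E} {e : G.E} (he : e ∈ D) :
    ∃ x ∈ G.support D, e ∈ G.compEdges D x := by
  obtain ⟨a, b, h⟩ := G.gb_exists_ends e
  have ha : a ∈ G.ends e := by rw [h]; exact Sym2.mem_mk_left a b
  exact ⟨a, G.gb_mem_support.mpr ⟨e, he, ha⟩,
    G.gb_mem_comp_incident Relation.ReflTransGen.refl he ha⟩

lemma zmod2_eq01 : ∀ x : ZMod 2, x = 0 ∨ x = 1 := by decide

lemma zmod2_ite_mul (x g : ZMod 2) : (if x = 1 then g else 0) = x * g := by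
  rcases zmod2_eq01 x with rfl | rfl <;> simp

lemma gbChi_cast_eq_one (x : ZMod 2) : gbChi (x = 1) = x := by
  rcases zmod2_eq01 x with rfl | rfl <;> simp [gbChi]

lemma gb_sum_chi_gen {α : Type*} (U : Finset α) (a : α) :
    ∑ v ∈ U, gbChi (v = a) = gbChi (a ∈ U) := by
  classical
  have h2 : ∑ v ∈ U, gbChi (v = a) = ∑ v ∈ U, (if v = a then (1:ZMod 2) else 0) :=
    Finset.sum_congr rfl fun v _ => by unfold gbChi; congr 1
  rw [h2, Finset.sum_ite_eq' U a (fun _ => (1:ZMod 2))]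
  unfold gbChi
  congr 1

lemma gb_support_mono {S S' : Finset G.E} (h : S ⊆ S') :
    G.support S ⊆ G.support S' := by
  intro v hv
  rw [gb_mem_support] at hv ⊢
  obtain ⟨e, he, hh⟩ := hv
  exact ⟨e, h he, hh⟩

lemma gb_sum_chi (U : Finset G.V) (a : G.V) :
    ∑ v ∈ U, gbChi (v = a) = gbChi (a ∈ U) := by
  unfold gbChi
  rw [Finset.sum_ite_eq' U a (fun _ => (1 : ZMod 2))]
  by_cases h : a ∈ U <;> simp [h]

lemma gb_filter_parity_sum {ι : Type*} (Idx : Finset ι) (Pa : ι → Finset G.E)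
    (T' : Finset G.E) (hPa : ∀ i ∈ Idx, Pa i ⊆ T') (g : G.E → ZMod 2) :
    ∑ f ∈ T'.filter (fun f => (((Idx.filter (fun i => f ∈ Pa i)).card : ℕ) : ZMod 2) = 1), g f
      = ∑ i ∈ Idx, ∑ f ∈ Pa i, g f := by
  rw [Finset.sum_filter]
  have h1 : ∀ f ∈ T', (if (((Idx.filter (fun i => f ∈ Pa i)).card : ℕ) : ZMod 2) = 1
      then g f else 0) = ∑ i ∈ Idx, (if f ∈ Pa i then g f else 0) := by
    intro f _
    rw [zmod2_ite_mul, Finset.card_filter, Nat.cast_sum, Finset.sum_mul]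
    refine Finset.sum_congr rfl fun i _ => ?_
    by_cases hfi : f ∈ Pa i <;> simp [hfi]
  rw [Finset.sum_congr rfl h1, Finset.sum_comm]
  refine Finset.sum_congr rfl fun i hi => ?_
  rw [← Finset.sum_filter]
  congr 1
  ext f
  rw [Finset.mem_filter]
  exact ⟨fun h => h.2, fun h => ⟨hPa i hi h, h⟩⟩

lemma gb_classDeg_cast (ℬ : Finset (Finset G.E)) (C : Finset G.E) (v : G.V) :
    ((G.classDeg ℬ C v : ℕ) : ZMod 2) = ∑ e ∈ C, G.gbCInd (G.classOf ℬ v) e := by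
  unfold classDeg
  rw [Nat.cast_sum]
  exact G.gb_sum_degIn C (G.classOf ℬ v)

lemma gb_reach_stay {S : Finset G.E} {U : Finset G.V} {x u : G.V}
    (h : G.Reach S x u) (hnc : ∀ e ∈ S, ¬ G.crossesB U e = true) (hx : x ∈ U) : u ∈ U := by
  by_contra hu
  obtain ⟨e, he, hc⟩ := G.gb_reach_cross h hx hu
  exact hnc e he hc

lemma gb_reach_fix {S : Finset G.E} {v u : G.V} (hv : v ∉ G.support S)
    (h : G.Reach S v u) : u = v := by
  rcases Relation.ReflTransGen.cases_head h with rfl | ⟨w, ⟨e, he, hee⟩, _⟩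
  · rfl
  · exact absurd (G.gb_mem_support.mpr ⟨e, he, by rw [hee]; exact Sym2.mem_mk_left v w⟩) hv

lemma gb_degIn_pos {F : Finset G.E} {e : G.E} {v : G.V} (he : e ∈ F) (hv : v ∈ G.ends e) :
    1 ≤ G.degIn F v := by
  unfold degIn
  have h1 : 1 ≤ (if G.ends e = Sym2.diag v then (2:ℕ) else if v ∈ G.ends e then 1 else 0) := by
    by_cases h2 : G.ends e = Sym2.diag v
    · rw [if_pos h2]; omega
    · rw [if_neg h2, if_pos hv]
  exact le_trans h1 (Finset.single_le_sum
    (f := fun e => if G.ends e = Sym2.diag v then 2 else if v ∈ G.ends e then 1 else 0)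
    (fun i _ => Nat.zero_le _) he)

lemma gb_handshake (F : Finset G.E) : ∑ v : G.V, G.degIn F v = 2 * F.card := by
  unfold degIn
  rw [Finset.sum_comm]
  rw [Finset.card_eq_sum_ones, Finset.mul_sum]
  refine Finset.sum_congr rfl fun e _ => ?_
  obtain ⟨a, b, h⟩ := G.gb_exists_ends e
  by_cases hab : a = b
  · subst hab
    have hd : ∀ v : G.V, (G.ends e = Sym2.diag v) ↔ v = a := by
      intro v
      rw [h, G.gb_diag_eq]
      constructor
      · rintro ⟨rfl, -⟩; rfl
      · rintro rfl; exact ⟨rfl, rfl⟩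
    have : ∀ v : G.V, (if G.ends e = Sym2.diag v then (2:ℕ) else if v ∈ G.ends e then 1 else 0)
        = if v = a then 2 else 0 := by
      intro v
      by_cases hv : v = a
      · rw [if_pos ((hd v).mpr hv), if_pos hv]
      · rw [if_neg (fun hh => hv ((hd v).mp hh)), if_neg hv]
        simp only [G.gb_mem_ends h]
        simp [hv]
    rw [Finset.sum_congr rfl (fun v _ => this v), Finset.sum_ite_eq' Finset.univ a (fun _ => (2:ℕ))]
    simp
  · have hd : ∀ v : G.V, ¬ (G.ends e = Sym2.diag v) := by
      intro v hh
      rw [h, G.gb_diag_eq] at hh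
      exact hab (hh.1.trans hh.2.symm)
    have : ∀ v : G.V, (if G.ends e = Sym2.diag v then (2:ℕ) else if v ∈ G.ends e then 1 else 0)
        = (if v = a then 1 else 0) + if v = b then 1 else 0 := by
      intro v
      rw [if_neg (hd v)]
      simp only [G.gb_mem_ends h]
      by_cases hva : v = a
      · have hx : ¬ v = b := fun hh => hab (hva.symm.trans hh)
        simp [hva, hx]
        exact hab
      · by_cases hvb : v = b <;> simp [hva, hvb]
        exact fun hh => hab hh.symm
    rw [Finset.sum_congr rfl (fun v _ => this v), Finset.sum_add_distrib,
      Finset.sum_ite_eq' Finset.univ a (fun _ => (1:ℕ)),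
      Finset.sum_ite_eq' Finset.univ b (fun _ => (1:ℕ))]
    simp

end SignedMultigraph

open SignedMultigraph in
theorem genBarbell_subgraph_exists (G : SignedMultigraph)
    (hn : 2 ≤ (G.negEdges Finset.univ).card)
    (htree : G.IsSpanningTree (Finset.univ \ G.negEdges Finset.univ))
    (heven : Even (G.negEdges Finset.univ).card) :
    ∃ S : Finset G.E, G.IsGenBarbell S ∧
      (∀ b : G.E, G.IsBgBridge b → b ∈ S) ∧
      ∀ e ∈ G.negEdges Finset.univ, G.SSet e ⊆ S := by
  classical
  obtain ⟨hTacy, hVne, hTreach⟩ := htree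
  set N : Finset G.E := G.negEdges Finset.univ with hNdef
  set T : Finset G.E := Finset.univ \ N with hTdef
  have hpath : ∀ x y : G.V, ∃ P, P ⊆ T ∧ ∀ v,
      ((G.degIn P v : ℕ) : ZMod 2) = gbChi (v = x) + gbChi (v = y) :=
    fun x y => G.gb_path_exists (hTreach x y)
  choose Path hPathT hPathDeg using hpath
  choose enA enB hen using G.gb_exists_ends
  set Pe : G.E → Finset G.E := fun e => Path (enA e) (enB e) with hPe
  set DT : Finset G.E :=
    T.filter (fun f => (((N.filter (fun e => f ∈ Pe e)).card : ℕ) : ZMod 2) = 1) with hDTdef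
  set Dl : Finset G.E := N ∪ DT with hDl
  have hDTsubT : DT ⊆ T := Finset.filter_subset _ _
  have hTN : ∀ {f}, f ∈ T → f ∉ N := by
    intro f hf
    rw [hTdef, Finset.mem_sdiff] at hf
    exact hf.2
  have hNT : Disjoint N DT := by
    rw [Finset.disjoint_left]
    intro f hfN hfDT
    exact hTN (hDTsubT hfDT) hfN
  have hNDl : N ⊆ Dl := Finset.subset_union_left
  have hDlT : Dl ⊆ N ∪ T := Finset.union_subset_union (le_refl N) hDTsubT
  -- path cut-parity
  have hPesum : ∀ (U : Finset G.V) (e : G.E), ∑ f ∈ Pe e, G.gbCInd U f = G.gbCInd U e := by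
    intro U e
    rw [← G.gb_sum_degIn (Pe e) U]
    rw [Finset.sum_congr rfl (fun v _ => hPathDeg (enA e) (enB e) v), Finset.sum_add_distrib,
      gb_sum_chi, gb_sum_chi, ← G.gb_cInd_eq (hen e) U]
  have hDTsum : ∀ U : Finset G.V, ∑ f ∈ DT, G.gbCInd U f = ∑ e ∈ N, G.gbCInd U e := by
    intro U
    rw [hDTdef, G.gb_filter_parity_sum N Pe T (fun e _ => hPathT _ _) (G.gbCInd U)]
    exact Finset.sum_congr rfl fun e _ => hPesum U e
  have hDlcInd : ∀ U, ∑ f ∈ Dl, G.gbCInd U f = 0 := by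
    intro U
    rw [hDl, Finset.sum_union hNT, hDTsum]
    exact zmod2_add_self _
  have hDldeg0 : ∀ v, ((G.degIn Dl v : ℕ) : ZMod 2) = 0 := by
    intro v; rw [G.gb_degIn_cast]; exact hDlcInd {v}
  have hDlE : ∀ v, Even (G.degIn Dl v) := fun v => (gb_cast_eq_zero_iff _).mp (hDldeg0 v)
  -- blobs
  set ℬ : Finset (Finset G.E) := (G.support Dl).image (fun x => G.compEdges Dl x) with hBdef
  have hBmem : ∀ {B}, B ∈ ℬ ↔ ∃ x ∈ G.support Dl, G.compEdges Dl x = B := by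
    intro B; rw [hBdef, Finset.mem_image]
  have hBsubDl : ∀ B ∈ ℬ, B ⊆ Dl := by
    intro B hB
    obtain ⟨x, hx, rfl⟩ := hBmem.mp hB
    exact G.gb_comp_subset
  have hBsupp : ∀ B ∈ ℬ, ∀ {v}, v ∈ G.support B → G.compEdges Dl v = B := by
    intro B hB v hv
    obtain ⟨x, hx, rfl⟩ := hBmem.mp hB
    exact (G.gb_comp_eq (G.gb_support_comp hv)).symm
  have hBdisj : ∀ B₁ ∈ ℬ, ∀ B₂ ∈ ℬ, B₁ ≠ B₂ → Disjoint (G.support B₁) (G.support B₂) := by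
    intro B₁ h1 B₂ h2 hne
    rw [Finset.disjoint_left]
    intro v hv1 hv2
    exact hne ((hBsupp _ h1 hv1).symm.trans (hBsupp _ h2 hv2))
  have hBeul : ∀ B ∈ ℬ, G.IsEulerianSub B := by
    intro B hB
    obtain ⟨x, hx, rfl⟩ := hBmem.mp hB
    refine ⟨?_, G.gb_comp_connOn, ?_⟩
    · obtain ⟨e, he, hxe⟩ := G.gb_mem_support.mp hx
      exact ⟨e, G.gb_mem_comp_incident Relation.ReflTransGen.refl he hxe⟩
    · intro v hv
      rw [G.gb_degIn_comp hv]
      exact hDlE v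
  have hBunion : ∀ {e}, (∃ B ∈ ℬ, e ∈ B) ↔ e ∈ Dl := by
    intro e
    constructor
    · rintro ⟨B, hB, heB⟩; exact hBsubDl B hB heB
    · intro he
      obtain ⟨x, hx, hx2⟩ := G.gb_comp_cover he
      exact ⟨G.compEdges Dl x, hBmem.mpr ⟨x, hx, rfl⟩, hx2⟩
  have hsupDl : ℬ.sup id = Dl := by
    ext e
    rw [Finset.mem_sup]
    exact hBunion
  have hvblob : ∀ {v}, v ∈ G.support Dl ↔ ∃ B ∈ ℬ, v ∈ G.support B := by
    intro v
    constructor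
    · intro hv
      obtain ⟨e, he, hve⟩ := G.gb_mem_support.mp hv
      exact ⟨G.compEdges Dl v, hBmem.mpr ⟨v, hv, rfl⟩,
        G.gb_mem_support.mpr ⟨e, G.gb_mem_comp_incident Relation.ReflTransGen.refl he hve, hve⟩⟩
    · rintro ⟨B, hB, hv⟩
      exact G.gb_support_mono (hBsubDl B hB) hv
  -- classes
  have hclassB : ∀ B ∈ ℬ, ∀ {v}, v ∈ G.support B → G.classOf ℬ v = G.support B := by
    intro B hB v hv
    ext u
    unfold classOf
    rw [Finset.mem_filter]
    constructor
    · rintro ⟨-, rfl | ⟨B', hB', hvB', huB'⟩⟩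
      · exact hv
      · have : B' = B := by
          by_contra hne
          exact (Finset.disjoint_left.mp (hBdisj B' hB' B hB hne)) hvB' hv
        exact this ▸ huB'
    · intro hu
      exact ⟨Finset.mem_univ u, Or.inr ⟨B, hB, hv, hu⟩⟩
  have hclassS : ∀ {v}, v ∉ G.support Dl → G.classOf ℬ v = {v} := by
    intro v hv
    ext u
    unfold classOf
    rw [Finset.mem_filter, Finset.mem_singleton]
    constructor
    · rintro ⟨-, rfl | ⟨B, hB, hvB, -⟩⟩
      · rfl
      · exact absurd (hvblob.mpr ⟨B, hB, hvB⟩) hv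
    · rintro rfl
      exact ⟨Finset.mem_univ u, Or.inl rfl⟩
  -- intra edges never cross classes
  have hnocross : ∀ (v : G.V) (f : G.E), (∃ B ∈ ℬ, ∀ u ∈ G.ends f, u ∈ G.support B) →
      ¬ G.crossesB (G.classOf ℬ v) f = true := by
    rintro v f ⟨B', hB', hf⟩
    have ha : enA f ∈ G.support B' := hf _ (by rw [hen f]; exact Sym2.mem_mk_left _ _)
    have hb : enB f ∈ G.support B' := hf _ (by rw [hen f]; exact Sym2.mem_mk_right _ _)
    by_cases hv : v ∈ G.support Dl
    · obtain ⟨B₀, hB₀, hvB₀⟩ := hvblob.mp hv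
      rw [hclassB B₀ hB₀ hvB₀]
      by_cases hBB : B' = B₀
      · subst hBB
        exact G.gb_not_cross_both (hen f) ha hb
      · have hd := Finset.disjoint_left.mp (hBdisj B' hB' B₀ hB₀ hBB)
        exact G.gb_not_cross_neither (hen f) (hd ha) (hd hb)
    · rw [hclassS hv]
      have hnv : ∀ u, u ∈ G.support B' → u ∉ ({v} : Finset G.V) := by
        intro u hu h1
        rw [Finset.mem_singleton] at h1
        subst h1
        exact hv (hvblob.mpr ⟨B', hB', hu⟩)
      exact G.gb_not_cross_neither (hen f) (hnv _ ha) (hnv _ hb)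
  have hintraDl : ∀ e ∈ Dl, ∃ B ∈ ℬ, ∀ u ∈ G.ends e, u ∈ G.support B := by
    intro e he
    obtain ⟨B, hB, heB⟩ := hBunion.mpr he
    exact ⟨B, hB, fun u hu => G.gb_mem_support.mpr ⟨e, heB, hu⟩⟩
  -- negEdges partition
  have hnegBsub : ∀ B ∈ ℬ, G.negEdges B ⊆ B := fun B _ => Finset.filter_subset _ _
  have hBpairdisj : ∀ B₁ ∈ ℬ, ∀ B₂ ∈ ℬ, B₁ ≠ B₂ → Disjoint B₁ B₂ := by
    intro B₁ h1 B₂ h2 hne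
    rw [Finset.disjoint_left]
    intro e he1 he2
    have ha : enA e ∈ G.support B₁ := G.gb_mem_support.mpr ⟨e, he1, by rw [hen e]; exact Sym2.mem_mk_left _ _⟩
    have hb : enA e ∈ G.support B₂ := G.gb_mem_support.mpr ⟨e, he2, by rw [hen e]; exact Sym2.mem_mk_left _ _⟩
    exact Finset.disjoint_left.mp (hBdisj B₁ h1 B₂ h2 hne) ha hb
  have hNneg : ∀ {e : G.E}, e ∈ N ↔ G.neg e = true := by
    intro e
    rw [hNdef, G.gb_mem_negEdges]
    exact ⟨fun h => h.2, fun h => ⟨Finset.mem_univ e, h⟩⟩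
  have hNbiUnion : N = ℬ.biUnion (fun B => G.negEdges B) := by
    ext e
    rw [Finset.mem_biUnion]
    constructor
    · intro he
      obtain ⟨B, hB, heB⟩ := hBunion.mpr (hNDl he)
      exact ⟨B, hB, (G.gb_mem_negEdges B e).mpr ⟨heB, hNneg.mp he⟩⟩
    · rintro ⟨B, hB, heB⟩
      rw [G.gb_mem_negEdges] at heB
      exact hNneg.mpr heB.2
  have hNsum : ∑ B ∈ ℬ, (G.negEdges B).card = N.card := by
    rw [hNbiUnion, Finset.card_biUnion]
    intro B₁ h1 B₂ h2 hne
    exact Finset.disjoint_filter_filter (hBpairdisj B₁ h1 B₂ h2 hne)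
  -- targets
  set tgt : G.V → ZMod 2 := fun v => ((G.negEdges (G.compEdges Dl v)).card : ZMod 2) with htgtdef
  have htgtB : ∀ B ∈ ℬ, ∀ {v}, v ∈ G.support B → tgt v = ((G.negEdges B).card : ZMod 2) := by
    intro B hB v hv
    rw [htgtdef]
    simp only
    rw [hBsupp B hB hv]
  have htgt0 : ∀ {v}, v ∉ G.support Dl → tgt v = 0 := by
    intro v hv
    have : G.compEdges Dl v = ∅ := by
      rw [Finset.eq_empty_iff_forall_notMem]
      intro e he
      obtain ⟨heD, u, hue, hru⟩ := G.gb_comp_mem.mp he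
      have := G.gb_reach_fix hv hru
      subst this
      exact hv (G.gb_mem_support.mpr ⟨e, heD, hue⟩)
    rw [htgtdef]
    simp only [this]
    unfold negEdges
    simp
  -- roots
  set root : Finset G.E → G.V := fun B =>
    if h : (G.support B).Nonempty then h.choose else Classical.arbitrary G.V with hrootdef
  have hrootmem : ∀ B ∈ ℬ, root B ∈ G.support B := by
    intro B hB
    have hne : (G.support B).Nonempty := by
      obtain ⟨hBne, -, -⟩ := hBeul B hB
      obtain ⟨e, he⟩ := hBne
      exact ⟨enA e, G.gb_mem_support.mpr ⟨e, he, by rw [hen e]; exact Sym2.mem_mk_left _ _⟩⟩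
    rw [hrootdef]
    simp only [dif_pos hne]
    exact hne.choose_spec
  have hrootuniq : ∀ B₁ ∈ ℬ, ∀ B₂ ∈ ℬ, root B₁ ∈ G.support B₂ → B₁ = B₂ := by
    intro B₁ h1 B₂ h2 hr
    exact ((hBsupp B₁ h1 (hrootmem B₁ h1)).symm.trans (hBsupp B₂ h2 hr))
  set O : Finset (Finset G.E) := ℬ.filter (fun B => ((G.negEdges B).card : ZMod 2) = 1) with hOdef
  have hOsub : O ⊆ ℬ := Finset.filter_subset _ _
  have hOcard : ((O.card : ℕ) : ZMod 2) = 0 := by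
    have h1 : ((N.card : ℕ) : ZMod 2) = 0 := (gb_cast_eq_zero_iff _).mpr heven
    rw [← hNsum, Nat.cast_sum] at h1
    have h2 : ∑ B ∈ ℬ, (((G.negEdges B).card : ℕ) : ZMod 2)
        = ∑ B ∈ O, (1 : ZMod 2) := by
      rw [hOdef, Finset.sum_filter]
      refine Finset.sum_congr rfl fun B _ => ?_
      rcases zmod2_eq01 (((G.negEdges B).card : ℕ) : ZMod 2) with h | h <;> rw [h] <;> simp
    rw [h2] at h1
    rw [← h1]
    simp
  set r0 : G.V := Classical.arbitrary G.V with hr0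
  set rawConn : Finset G.E := T.filter
    (fun f => (((O.filter (fun B => f ∈ Path (root B) r0)).card : ℕ) : ZMod 2) = 1) with hrawdef
  set Conn0 : Finset G.E := rawConn.filter
    (fun f => ¬ ∃ B ∈ ℬ, ∀ u ∈ G.ends f, u ∈ G.support B) with hC0def
  have hrawsum : ∀ U : Finset G.V, ∑ f ∈ rawConn, G.gbCInd U f
      = ∑ B ∈ O, (gbChi (root B ∈ U) + gbChi (r0 ∈ U)) := by
    intro U
    rw [hrawdef, G.gb_filter_parity_sum O (fun B => Path (root B) r0) T
      (fun B _ => hPathT _ _) (G.gbCInd U)]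
    refine Finset.sum_congr rfl fun B _ => ?_
    rw [← G.gb_sum_degIn _ U,
      Finset.sum_congr rfl (fun v _ => hPathDeg (root B) r0 v), Finset.sum_add_distrib,
      gb_sum_chi, gb_sum_chi]
  have hchir0 : ∀ U : Finset G.V, ∑ B ∈ O, gbChi (r0 ∈ U) = 0 := by
    intro U
    rw [Finset.sum_const, nsmul_eq_mul]
    have : ((O.card : ℕ) : ZMod 2) = 0 := hOcard
    push_cast at this ⊢
    rw [this, zero_mul]
  -- class degrees of Conn0
  have hCparity : ∀ C : Finset G.E,
      (∀ f ∈ C, ¬ ∃ B ∈ ℬ, ∀ u ∈ G.ends f, u ∈ G.support B) →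
      (∀ v, ((G.classDeg ℬ C v : ℕ) : ZMod 2) = ∑ f ∈ C, G.gbCInd (G.classOf ℬ v) f) :=
    fun C _ v => G.gb_classDeg_cast ℬ C v
  have hC0parity : ∀ v, ((G.classDeg ℬ Conn0 v : ℕ) : ZMod 2) = tgt v := by
    intro v
    rw [G.gb_classDeg_cast ℬ Conn0 v]
    have hsplit : ∑ f ∈ Conn0, G.gbCInd (G.classOf ℬ v) f
        = ∑ f ∈ rawConn, G.gbCInd (G.classOf ℬ v) f := by
      rw [hC0def]
      rw [← Finset.sum_filter_add_sum_filter_not rawConn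
        (fun f => ¬ ∃ B ∈ ℬ, ∀ u ∈ G.ends f, u ∈ G.support B) (G.gbCInd (G.classOf ℬ v))]
      have : ∑ f ∈ rawConn.filter (fun f => ¬¬ ∃ B ∈ ℬ, ∀ u ∈ G.ends f, u ∈ G.support B),
          G.gbCInd (G.classOf ℬ v) f = 0 := by
        refine Finset.sum_eq_zero fun f hf => ?_
        rw [Finset.mem_filter] at hf
        have h2 := not_not.mp hf.2
        unfold gbCInd gbChi
        rw [if_neg (hnocross v f h2)]
      rw [this, add_zero]
    rw [hsplit, hrawsum, Finset.sum_add_distrib, hchir0, add_zero]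
    by_cases hv : v ∈ G.support Dl
    · obtain ⟨B₀, hB₀, hvB₀⟩ := hvblob.mp hv
      rw [hclassB B₀ hB₀ hvB₀, htgtB B₀ hB₀ hvB₀]
      have hpt : ∀ B ∈ O, gbChi (root B ∈ G.support B₀) = gbChi (B = B₀) := by
        intro B hB
        refine gbChi_congr ?_
        constructor
        · intro h; exact hrootuniq B (hOsub hB) B₀ hB₀ h
        · rintro rfl; exact hrootmem B (hOsub hB)
      rw [Finset.sum_congr rfl hpt]
      rw [gb_sum_chi_gen O B₀]
      have : (B₀ ∈ O) ↔ (((G.negEdges B₀).card : ℕ) : ZMod 2) = 1 := by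
        rw [hOdef, Finset.mem_filter]
        exact ⟨fun h => h.2, fun h => ⟨hB₀, h⟩⟩
      rw [gbChi_congr this, gbChi_cast_eq_one]
    · rw [hclassS hv, htgt0 hv]
      refine Finset.sum_eq_zero fun B hB => ?_
      unfold gbChi
      rw [if_neg]
      intro h
      rw [Finset.mem_singleton] at h
      exact hv (hvblob.mpr ⟨B, hOsub hB, h ▸ hrootmem B (hOsub hB)⟩)
  -- candidate set and minimal choice
  set goodP : G.E → Prop := fun f => f ∈ T ∧ ¬ ∃ B ∈ ℬ, ∀ u ∈ G.ends f, u ∈ G.support B with hgoodP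
  set Cands : Finset (Finset G.E) :=
    (Finset.univ.filter goodP).powerset.filter
      (fun C => ∀ v, ((G.classDeg ℬ C v : ℕ) : ZMod 2) = tgt v) with hCandsdef
  have hC0mem : Conn0 ∈ Cands := by
    rw [hCandsdef, Finset.mem_filter, Finset.mem_powerset]
    constructor
    · intro f hf
      rw [hC0def, Finset.mem_filter] at hf
      rw [Finset.mem_filter]
      exact ⟨Finset.mem_univ f, Finset.mem_of_mem_filter f (hf.1), hf.2⟩
    · exact hC0parity
  obtain ⟨Conn, hConnC, hConnmin⟩ := Finset.exists_min_image Cands Finset.card ⟨Conn0, hC0mem⟩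
  have hConngood : ∀ f ∈ Conn, goodP f := by
    intro f hf
    rw [hCandsdef, Finset.mem_filter, Finset.mem_powerset] at hConnC
    have := hConnC.1 hf
    rw [Finset.mem_filter] at this
    exact this.2
  have hConnpar : ∀ v, ((G.classDeg ℬ Conn v : ℕ) : ZMod 2) = tgt v := by
    rw [hCandsdef, Finset.mem_filter] at hConnC
    exact hConnC.2
  have hConnT : Conn ⊆ T := fun f hf => (hConngood f hf).1
  have hConnintra : ∀ f ∈ Conn, ¬ ∃ B ∈ ℬ, ∀ u ∈ G.ends f, u ∈ G.support B :=
    fun f hf => (hConngood f hf).2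
  have hConnDl : Disjoint Conn Dl := by
    rw [Finset.disjoint_left]
    intro f hfC hfD
    exact hConnintra f hfC (hintraDl f hfD)
  set S : Finset G.E := Dl ∪ Conn with hSdef
  -- boundary of S at class-sets sees only Conn
  have hbdS : ∀ (K : Finset G.V), (∀ e ∈ Dl, ¬ G.crossesB K e = true) →
      G.boundary S K = G.boundary Conn K := by
    intro K hK
    unfold boundary
    rw [hSdef, Finset.filter_union]
    rw [Finset.filter_false_of_mem hK, Finset.empty_union]
  have hclassK : ∀ v : G.V, ∀ e ∈ Dl, ¬ G.crossesB (G.classOf ℬ v) e = true := by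
    intro v e he
    exact hnocross v e (hintraDl e he)
  have hbdmem : ∀ {F : Finset G.E} {U : Finset G.V} {g : G.E},
      g ∈ G.boundary F U ↔ g ∈ F ∧ G.crossesB U g = true := by
    intro F U g; unfold boundary; exact Finset.mem_filter
  -- condition 3
  have hcond3 : ∀ F ⊆ S \ ℬ.sup id, F.Nonempty → ∃ v : G.V, G.classDeg ℬ F v = 1 := by
    intro F hFsub hFne
    have hFConn : F ⊆ Conn := by
      intro f hf
      have h1 := hFsub hf
      rw [hsupDl, Finset.mem_sdiff] at h1
      rcases Finset.mem_union.mp h1.1 with h | h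
      · exact absurd h h1.2
      · exact h
    by_contra hno
    push_neg at hno
    set rep : G.V → G.V := fun v =>
      if v ∈ G.support Dl then root (G.compEdges Dl v) else v with hrepdef
    have hvcompB : ∀ {v}, v ∈ G.support Dl →
        (G.compEdges Dl v ∈ ℬ ∧ v ∈ G.support (G.compEdges Dl v)) :=
      fun {v} hv => ⟨hBmem.mpr ⟨v, hv, rfl⟩, G.gb_comp_support_x hv⟩
    have hrep_blob : ∀ {v}, v ∈ G.support Dl → rep v = root (G.compEdges Dl v) := by
      intro v hv; rw [hrepdef]; simp [hv]
    have hrep_free : ∀ {v}, v ∉ G.support Dl → rep v = v := by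
      intro v hv; rw [hrepdef]; simp [hv]
    have hclassOf_rep : ∀ v, G.classOf ℬ (rep v) = G.classOf ℬ v := by
      intro v
      by_cases hv : v ∈ G.support Dl
      · obtain ⟨hBv, hvs⟩ := hvcompB hv
        rw [hrep_blob hv, hclassB _ hBv (hrootmem _ hBv), hclassB _ hBv hvs]
      · rw [hrep_free hv]
    have hmem_class_self : ∀ v, v ∈ G.classOf ℬ v := by
      intro v; unfold classOf; exact Finset.mem_filter.mpr ⟨Finset.mem_univ v, Or.inl rfl⟩
    have hrep_of_mem : ∀ {v w}, w ∈ G.classOf ℬ v → rep w = rep v := by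
      intro v w hw
      by_cases hv : v ∈ G.support Dl
      · obtain ⟨hBv, hvs⟩ := hvcompB hv
        rw [hclassB _ hBv hvs] at hw
        have hwD : w ∈ G.support Dl := hvblob.mpr ⟨_, hBv, hw⟩
        rw [hrep_blob hv, hrep_blob hwD, hBsupp _ hBv hw]
      · rw [hclassS hv, Finset.mem_singleton] at hw; rw [hw]
    have hrep_idem : ∀ v, rep (rep v) = rep v :=
      fun v => hrep_of_mem ((hclassOf_rep v) ▸ hmem_class_self (rep v))
    have hclassDeg_congr : ∀ (C : Finset G.E) {v w}, G.classOf ℬ v = G.classOf ℬ w →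
        G.classDeg ℬ C v = G.classDeg ℬ C w := by
      intro C v w h; unfold classDeg; rw [h]
    set reps : Finset G.V :=
      Finset.univ.filter (fun r => rep r = r ∧ G.classDeg ℬ F r ≠ 0) with hrepsdef
    have hreps_mem : ∀ {r}, r ∈ reps ↔ rep r = r ∧ G.classDeg ℬ F r ≠ 0 := by
      intro r
      rw [hrepsdef, Finset.mem_filter]
      exact ⟨fun h => h.2, fun h => ⟨Finset.mem_univ r, h⟩⟩
    have hdeg_le : ∀ {D₁ D₂ : Finset G.E}, D₁ ⊆ D₂ → ∀ v, G.degIn D₁ v ≤ G.degIn D₂ v := by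
      intro D₁ D₂ h v; unfold degIn; exact Finset.sum_le_sum_of_subset h
    have hclassdeg_le : ∀ {D₁ D₂ : Finset G.E}, D₁ ⊆ D₂ → ∀ v,
        G.classDeg ℬ D₁ v ≤ G.classDeg ℬ D₂ v := by
      intro D₁ D₂ h v; unfold classDeg; exact Finset.sum_le_sum (fun u _ => hdeg_le h u)
    have hdeg_self_le : ∀ (C : Finset G.E) (u : G.V), G.degIn C u ≤ G.classDeg ℬ C u := by
      intro C u
      unfold classDeg
      exact Finset.single_le_sum (f := fun w => G.degIn C w)
        (fun i _ => Nat.zero_le _) (hmem_class_self u)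
    have hrep_touch : ∀ {D : Finset G.E}, D ⊆ F → ∀ {u}, G.degIn D u ≠ 0 →
        rep u ∈ reps ∧ u ∈ G.classOf ℬ (rep u) := by
      intro D hD u hu
      have h1 : G.degIn F u ≠ 0 := fun h => hu (Nat.le_zero.mp (h ▸ hdeg_le hD u))
      have h2 : G.classDeg ℬ F u ≠ 0 := by
        intro h
        exact h1 (Nat.le_zero.mp (h ▸ hdeg_self_le F u))
      refine ⟨hreps_mem.mpr ⟨hrep_idem u, ?_⟩, ?_⟩
      · rw [hclassDeg_congr F (hclassOf_rep u)]; exact h2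
      · rw [hclassOf_rep u]; exact hmem_class_self u
    have hsum_reps : ∀ D ⊆ F, ∑ r ∈ reps, G.classDeg ℬ D r = 2 * D.card := by
      intro D hD
      have hdisj : ∀ r₁ ∈ reps, ∀ r₂ ∈ reps, r₁ ≠ r₂ →
          Disjoint (G.classOf ℬ r₁) (G.classOf ℬ r₂) := by
        intro r₁ h1 r₂ h2 hne
        rw [Finset.disjoint_left]
        intro w hw1 hw2
        have e1 := hrep_of_mem hw1
        have e2 := hrep_of_mem hw2
        exact hne (((hreps_mem.mp h1).1.symm.trans (e1.symm.trans e2)).trans (hreps_mem.mp h2).1)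
      have hbu : ∑ r ∈ reps, G.classDeg ℬ D r
          = ∑ u ∈ reps.biUnion (fun r => G.classOf ℬ r), G.degIn D u := by
        unfold classDeg
        exact (Finset.sum_biUnion hdisj).symm
      rw [hbu, Finset.sum_subset (Finset.subset_univ _) ?_, G.gb_handshake D]
      intro u _ hnot
      by_contra h0
      obtain ⟨hr, hu2⟩ := hrep_touch hD h0
      exact hnot (Finset.mem_biUnion.mpr ⟨rep u, hr, hu2⟩)
    have hreps_le : reps.card ≤ F.card := by
      have h2 : ∀ r ∈ reps, 2 ≤ G.classDeg ℬ F r := by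
        intro r hr
        have ha := (hreps_mem.mp hr).2
        have hb := hno r
        omega
      have hle : 2 * reps.card ≤ 2 * F.card := by
        calc 2 * reps.card = ∑ _r ∈ reps, 2 := by
              rw [Finset.sum_const, smul_eq_mul, mul_comm]
          _ ≤ ∑ r ∈ reps, G.classDeg ℬ F r := Finset.sum_le_sum h2
          _ = 2 * F.card := hsum_reps F (subset_refl F)
      omega
    have hreps_ne : reps.Nonempty := by
      obtain ⟨e, he⟩ := hFne
      have h1 : G.degIn F (enA e) ≠ 0 := by
        have := G.gb_degIn_pos he (by rw [hen e]; exact Sym2.mem_mk_left _ _)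
        omega
      obtain ⟨hr, -⟩ := hrep_touch (subset_refl F) h1
      exact ⟨rep (enA e), hr⟩
    obtain ⟨t0, ht0⟩ := hreps_ne
    have hcardlt : Fintype.card (↥(reps.erase t0) → ZMod 2)
        < Fintype.card ↥(F.powerset) := by
      rw [Fintype.card_fun, Fintype.card_coe, Fintype.card_coe, Finset.card_powerset,
        Finset.card_erase_of_mem ht0]
      have h1 : 1 ≤ reps.card := Finset.card_pos.mpr ⟨t0, ht0⟩
      have h2 : reps.card - 1 < F.card := by omega
      have : Fintype.card (ZMod 2) = 2 := by decide
      rw [this]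
      exact Nat.pow_lt_pow_right (by omega) h2
    obtain ⟨C1, C2, hne12, heq⟩ := Fintype.exists_ne_map_eq_of_card_lt
      (fun (C : ↥(F.powerset)) (r : ↥(reps.erase t0)) =>
        ((G.classDeg ℬ (C : Finset G.E) (r : G.V) : ℕ) : ZMod 2)) hcardlt
    set D : Finset G.E := symmDiff (C1 : Finset G.E) (C2 : Finset G.E) with hDdef
    have hC1F : (C1 : Finset G.E) ⊆ F := Finset.mem_powerset.mp C1.2
    have hC2F : (C2 : Finset G.E) ⊆ F := Finset.mem_powerset.mp C2.2
    have hDF : D ⊆ F := by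
      intro f hf
      have := symmDiff_le_sup (a := (C1 : Finset G.E)) (b := (C2 : Finset G.E)) hf
      rw [Finset.sup_eq_union, Finset.mem_union] at this
      rcases this with h | h
      · exact hC1F h
      · exact hC2F h
    have hDne : D.Nonempty := by
      rw [Finset.nonempty_iff_ne_empty]
      intro h
      refine hne12 (Subtype.ext ?_)
      have := symmDiff_eq_bot.mp (by rw [← Finset.bot_eq_empty] at h; exact h)
      exact this
    have hDcast : ∀ v, ((G.classDeg ℬ D v : ℕ) : ZMod 2)
        = ((G.classDeg ℬ (C1 : Finset G.E) v : ℕ) : ZMod 2)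
          + ((G.classDeg ℬ (C2 : Finset G.E) v : ℕ) : ZMod 2) := by
      intro v
      unfold classDeg
      rw [Nat.cast_sum, Nat.cast_sum, Nat.cast_sum, ← Finset.sum_add_distrib]
      exact Finset.sum_congr rfl fun u _ => G.gb_degIn_symmDiff _ _ u
    have hDzero_reps : ∀ r ∈ reps, ((G.classDeg ℬ D r : ℕ) : ZMod 2) = 0 := by
      intro r hr
      by_cases hrt : r = t0
      · rw [hrt]
        have hsum0 : ∑ x ∈ reps, ((G.classDeg ℬ D x : ℕ) : ZMod 2) = 0 := by
          rw [← Nat.cast_sum, hsum_reps D hDF]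
          exact (gb_cast_eq_zero_iff _).mpr (even_two_mul _)
        have herase : ∀ x ∈ reps.erase t0, ((G.classDeg ℬ D x : ℕ) : ZMod 2) = 0 := by
          intro x hx
          rw [hDcast]
          have := congrFun heq ⟨x, hx⟩
          simp only at this
          rw [this]
          exact zmod2_add_self _
        rw [← Finset.sum_erase_add reps _ ht0, Finset.sum_congr rfl herase,
          Finset.sum_const_zero, zero_add] at hsum0
        exact hsum0
      · have hx : r ∈ reps.erase t0 := Finset.mem_erase.mpr ⟨hrt, hr⟩
        rw [hDcast]
        have := congrFun heq ⟨r, hx⟩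
        simp only at this
        rw [this]
        exact zmod2_add_self _
    have hDzero : ∀ v, ((G.classDeg ℬ D v : ℕ) : ZMod 2) = 0 := by
      intro v
      by_cases hv : G.classDeg ℬ F v = 0
      · have := hclassdeg_le hDF v
        rw [hv] at this
        rw [Nat.le_zero.mp this]
        rfl
      · have hrv : rep v ∈ reps := hreps_mem.mpr ⟨hrep_idem v, by
          rw [hclassDeg_congr F (hclassOf_rep v)]; exact hv⟩
        rw [hclassDeg_congr D (hclassOf_rep v).symm]
        exact hDzero_reps (rep v) hrv
    have hDConn : D ⊆ Conn := hDF.trans hFConn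
    have hConn' : (Conn \ D) ∈ Cands := by
      rw [hCandsdef, Finset.mem_filter, Finset.mem_powerset]
      constructor
      · refine subset_trans (Finset.sdiff_subset) ?_
        rw [hCandsdef, Finset.mem_filter, Finset.mem_powerset] at hConnC
        exact hConnC.1
      · intro v
        have hadd : G.classDeg ℬ Conn v = G.classDeg ℬ (Conn \ D) v + G.classDeg ℬ D v := by
          unfold classDeg
          rw [← Finset.sum_add_distrib]
          refine Finset.sum_congr rfl fun u _ => ?_
          unfold degIn
          exact (Finset.sum_sdiff hDConn).symm
        have := hConnpar v
        rw [hadd] at this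
        push_cast at this
        rw [hDzero v, add_zero] at this
        exact this
    have hlt : (Conn \ D).card < Conn.card :=
      Finset.card_lt_card (Finset.sdiff_ssubset hDConn hDne)
    have := hConnmin (Conn \ D) hConn'
    omega
  -- condition 4
  have hcond4 : ∀ B ∈ ℬ, (G.negEdges B).card ≡ (G.boundary S (G.support B)).card [MOD 2] := by
    intro B hB
    rw [← gb_cast_modeq]
    have hK : G.support B = G.classOf ℬ (root B) := (hclassB B hB (hrootmem B hB)).symm
    rw [hK, hbdS _ (hclassK (root B)), G.gb_boundary_card, ← G.gb_classDeg_cast, hConnpar,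
      htgtB B hB (hrootmem B hB)]
  -- condition 5
  have hcond5 : ∀ v ∈ G.support S, (∀ B ∈ ℬ, v ∉ G.support B) →
      Even (G.boundary S {v}).card := by
    intro v hv hvB
    have hvD : v ∉ G.support Dl := fun h => by
      obtain ⟨B, hB, hvB'⟩ := hvblob.mp h
      exact hvB B hB hvB'
    have hK : ({v} : Finset G.V) = G.classOf ℬ v := (hclassS hvD).symm
    rw [← gb_cast_eq_zero_iff, hK, hbdS _ (hclassK v), G.gb_boundary_card,
      ← G.gb_classDeg_cast, hConnpar, htgt0 hvD]
  -- Bg bridges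
  have hBg : ∀ b : G.E, G.IsBgBridge b → b ∈ S := by
    intro b hb
    obtain ⟨⟨U0, hU0⟩, x, hxb, hodd⟩ := hb
    by_cases hbDl : b ∈ Dl
    · exact Finset.mem_union_left _ hbDl
    have hbN : b ∉ N := fun h => hbDl (hNDl h)
    have hbT : b ∈ T := by
      rw [hTdef, Finset.mem_sdiff]; exact ⟨Finset.mem_univ b, hbN⟩
    have hswap : ∀ U : Finset G.V, G.boundary Finset.univ U = {b} → x ∈ U → b ∈ S := by
      intro U hU hxU
      have honly : ∀ g : G.E, G.crossesB U g = true → g = b := by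
        intro g hg
        have : g ∈ G.boundary Finset.univ U := hbdmem.mpr ⟨Finset.mem_univ g, hg⟩
        rw [hU] at this
        exact Finset.mem_singleton.mp this
      have hcrossb : G.crossesB U b = true := by
        have : b ∈ G.boundary Finset.univ U := by rw [hU]; exact Finset.mem_singleton_self b
        exact (hbdmem.mp this).2
      obtain ⟨y, hxyends⟩ : ∃ y, G.ends b = s(x, y) := by
        have := hxb
        rw [G.gb_mem_ends (hen b)] at this
        rcases this with rfl | rfl
        · exact ⟨enB b, hen b⟩
        · exact ⟨enA b, by rw [hen b, Sym2.eq_swap]⟩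
      have hxyne : x ≠ y := G.gb_tree_ne hTacy hbT hxyends
      have hyU : y ∉ U := by
        rcases G.gb_cross_endpoints hxyends hcrossb with ⟨-, h⟩ | ⟨h, -⟩
        · exact h
        · exact absurd hxU h
      -- no blob straddles U
      have hblobside : ∀ B ∈ ℬ, ∀ u ∈ G.support B, ∀ w ∈ G.support B, u ∈ U → w ∈ U := by
        intro B hB u hu w hw huU
        by_contra hwU
        obtain ⟨-, hconn, -⟩ := hBeul B hB
        obtain ⟨g, hgB, hgc⟩ := G.gb_reach_cross (hconn u hu w hw) huU hwU
        exact hbDl (by rw [← honly g hgc] at hbDl ⊢; exact hBsubDl B hB hgB)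
      -- U is the reach-set of x in T.erase b
      have herasesub : T.erase b ⊆ Finset.univ.erase b := by
        intro g hg
        rw [Finset.mem_erase] at hg ⊢
        exact ⟨hg.1, Finset.mem_univ g⟩
      have hnocrossU : ∀ g ∈ Finset.univ.erase b, ¬ G.crossesB U g = true := by
        intro g hg hc
        rw [Finset.mem_erase] at hg
        exact hg.1 (honly g hc)
      have hcover : ∀ v, G.Reach (T.erase b) x v ∨ G.Reach (T.erase b) y v := by
        intro v
        have h := hTreach x v
        induction h with
        | refl => exact Or.inl Relation.ReflTransGen.refl
        | tail hr hadj ih =>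
          rename_i w c
          obtain ⟨e, heT, hee⟩ := hadj
          by_cases heb : e = b
          · subst heb
            rw [hee] at hxyends
            rw [Sym2.eq_iff] at hxyends
            rcases hxyends with ⟨-, h2⟩ | ⟨-, h2⟩
            · rw [h2]; exact Or.inr Relation.ReflTransGen.refl
            · rw [h2]; exact Or.inl Relation.ReflTransGen.refl
          · have hadj' : G.Adj (T.erase b) w c := ⟨e, Finset.mem_erase.mpr ⟨heb, heT⟩, hee⟩
            rcases ih with h | h
            · exact Or.inl (Relation.ReflTransGen.tail h hadj')
            · exact Or.inr (Relation.ReflTransGen.tail h hadj')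
      have hdisjside : ∀ v, G.Reach (T.erase b) x v → G.Reach (T.erase b) y v → False := by
        intro v hxv hyv
        have hxy : G.Reach (T.erase b) x y := hxv.trans (G.gb_reach_symm hyv)
        obtain ⟨P, hPsub, hPdeg⟩ := G.gb_path_exists hxy
        have hbP : b ∉ P := fun h => (Finset.mem_erase.mp (hPsub h)).1 rfl
        set Dd : Finset G.E := symmDiff P {b} with hDd
        have hbDd : b ∈ Dd := by
          rw [hDd, Finset.mem_symmDiff]
          exact Or.inr ⟨Finset.mem_singleton_self b, hbP⟩
        have hDdT : Dd ⊆ T := by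
          intro g hg
          rw [hDd, Finset.mem_symmDiff] at hg
          rcases hg with ⟨h1, -⟩ | ⟨h1, -⟩
          · exact (Finset.erase_subset b T) (hPsub h1)
          · rw [Finset.mem_singleton] at h1; exact h1 ▸ hbT
        have hDdeg : ∀ v, ((G.degIn Dd v : ℕ) : ZMod 2) = 0 := by
          intro u
          rw [hDd, G.gb_degIn_symmDiff, hPdeg]
          have : ((G.degIn {b} u : ℕ) : ZMod 2) = gbChi (u = x) + gbChi (u = y) := by
            rw [G.gb_degIn_cast, Finset.sum_singleton, G.gb_cInd_eq hxyends]
            rw [gbChi_congr (show x ∈ ({u}:Finset G.V) ↔ u = x from by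
                rw [Finset.mem_singleton]; exact eq_comm),
              gbChi_congr (show y ∈ ({u}:Finset G.V) ↔ u = y from by
                rw [Finset.mem_singleton]; exact eq_comm)]
          rw [this]
          have h1 := gbChi_self_add (u = x)
          have h2 := gbChi_self_add (u = y)
          calc gbChi (u = x) + gbChi (u = y) + (gbChi (u = x) + gbChi (u = y))
              = (gbChi (u = x) + gbChi (u = x)) + (gbChi (u = y) + gbChi (u = y)) := by ring
            _ = 0 := by rw [h1, h2, add_zero]
        have := G.gb_acyclic_empty hTacy hDdT hDdeg
        rw [this] at hbDd
        exact Finset.notMem_empty b hbDd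
      have hUreach : ∀ v, v ∈ U ↔ G.Reach (T.erase b) x v := by
        intro v
        constructor
        · intro hvU
          rcases hcover v with h | h
          · exact h
          · exfalso
            have hyU' : y ∈ Finset.univ \ U := Finset.mem_sdiff.mpr ⟨Finset.mem_univ y, hyU⟩
            have : v ∈ Finset.univ \ U := by
              refine G.gb_reach_stay h ?_ hyU'
              intro g hg hc
              rw [gb_cross_compl] at hc
              exact hnocrossU g (herasesub hg) hc
            exact (Finset.mem_sdiff.mp this).2 hvU
        · intro h
          refine G.gb_reach_stay h ?_ hxU
          intro g hg hc
          exact hnocrossU g (herasesub hg) hc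
      -- characterization of the component of x in G - b
      have hsame : ∀ g : G.E, ¬ G.crossesB U g = true → (enA g ∈ U ↔ enB g ∈ U) := by
        intro g hc
        rw [G.gb_crossesB_eq (hen g)] at hc
        by_cases h1 : enA g ∈ U <;> by_cases h2 : enB g ∈ U <;> simp [h1, h2] at hc ⊢
      have hcompchar : ∀ e : G.E, e ∈ G.compEdges (Finset.univ.erase b) x ↔
          (e ≠ b ∧ ∀ u ∈ G.ends e, u ∈ U) := by
        intro e
        rw [gb_comp_mem]
        constructor
        · rintro ⟨heE, u, hue, hru⟩
          have hne : e ≠ b := (Finset.mem_erase.mp heE).1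
          have huU : u ∈ U := G.gb_reach_stay hru hnocrossU hxU
          refine ⟨hne, fun w hw => ?_⟩
          have hnc : ¬ G.crossesB U e = true := fun hc => hne (honly e hc)
          have hiff := hsame e hnc
          rw [G.gb_mem_ends (hen e)] at hue hw
          rcases hue with rfl | rfl <;> rcases hw with rfl | rfl
          · exact huU
          · exact hiff.mp huU
          · exact hiff.mpr huU
          · exact huU
        · rintro ⟨hne, hall⟩
          have haU : enA e ∈ U := hall _ (by rw [hen e]; exact Sym2.mem_mk_left _ _)
          refine ⟨Finset.mem_erase.mpr ⟨hne, Finset.mem_univ e⟩, enA e,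
            (by rw [hen e]; exact Sym2.mem_mk_left _ _), ?_⟩
          exact G.gb_reach_mono (fun g hg => herasesub hg) ((hUreach (enA e)).mp haU)
      set BU : Finset (Finset G.E) := ℬ.filter (fun B => root B ∈ U) with hBUdef
      have hnegcomp : G.negEdges (G.compEdges (Finset.univ.erase b) x)
          = BU.biUnion (fun B => G.negEdges B) := by
        ext e
        rw [G.gb_mem_negEdges, Finset.mem_biUnion]
        constructor
        · rintro ⟨hec, hneg⟩
          have heN : e ∈ N := hNneg.mpr hneg
          obtain ⟨B, hB, heB⟩ := hBunion.mpr (hNDl heN)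
          have haU : enA e ∈ U := (hcompchar e).mp hec |>.2 _
            (by rw [hen e]; exact Sym2.mem_mk_left _ _)
          have hasupp : enA e ∈ G.support B :=
            G.gb_mem_support.mpr ⟨e, heB, by rw [hen e]; exact Sym2.mem_mk_left _ _⟩
          have hrootU : root B ∈ U :=
            hblobside B hB (enA e) hasupp (root B) (hrootmem B hB) haU
          refine ⟨B, ?_, (G.gb_mem_negEdges B e).mpr ⟨heB, hneg⟩⟩
          rw [hBUdef, Finset.mem_filter]
          exact ⟨hB, hrootU⟩
        · rintro ⟨B, hBU, heB⟩
          rw [hBUdef, Finset.mem_filter] at hBU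
          rw [G.gb_mem_negEdges] at heB
          have heN : e ∈ N := hNneg.mpr heB.2
          have hne : e ≠ b := fun h => hbN (h ▸ heN)
          refine ⟨(hcompchar e).mpr ⟨hne, fun u hu => ?_⟩, heB.2⟩
          have husupp : u ∈ G.support B := G.gb_mem_support.mpr ⟨e, heB.1, hu⟩
          exact hblobside B hBU.1 (root B) (hrootmem B hBU.1) u husupp hBU.2
      -- parity computation
      have hsum1 : (((G.boundary Conn U).card : ℕ) : ZMod 2)
          = ∑ v ∈ U, ((G.degIn Conn v : ℕ) : ZMod 2) := G.gb_boundary_parity Conn U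
      have hUsplit : ∑ v ∈ U, ((G.degIn Conn v : ℕ) : ZMod 2)
          = ∑ v ∈ U.filter (fun v => v ∈ G.support Dl), ((G.degIn Conn v : ℕ) : ZMod 2) := by
        rw [← Finset.sum_filter_add_sum_filter_not U (fun v => v ∈ G.support Dl)]
        have : ∑ v ∈ U.filter (fun v => ¬ v ∈ G.support Dl), ((G.degIn Conn v : ℕ) : ZMod 2) = 0 := by
          refine Finset.sum_eq_zero fun v hv => ?_
          rw [Finset.mem_filter] at hv
          have h1 : ((G.classDeg ℬ Conn v : ℕ) : ZMod 2) = 0 := by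
            rw [hConnpar v, htgt0 hv.2]
          have h2 : G.classDeg ℬ Conn v = G.degIn Conn v := by
            unfold classDeg
            rw [hclassS hv.2, Finset.sum_singleton]
          rw [← h2, h1]
        rw [this, add_zero]
      have hUblob : U.filter (fun v => v ∈ G.support Dl)
          = BU.biUnion (fun B => G.support B) := by
        ext v
        rw [Finset.mem_filter, Finset.mem_biUnion]
        constructor
        · rintro ⟨hvU, hvD⟩
          have hB : G.compEdges Dl v ∈ ℬ := hBmem.mpr ⟨v, hvD, rfl⟩
          have hvs : v ∈ G.support (G.compEdges Dl v) := G.gb_comp_support_x hvD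
          refine ⟨G.compEdges Dl v, ?_, hvs⟩
          rw [hBUdef, Finset.mem_filter]
          exact ⟨hB, hblobside _ hB v hvs _ (hrootmem _ hB) hvU⟩
        · rintro ⟨B, hBU, hvB⟩
          rw [hBUdef, Finset.mem_filter] at hBU
          exact ⟨hblobside B hBU.1 (root B) (hrootmem B hBU.1) v hvB hBU.2,
            hvblob.mpr ⟨B, hBU.1, hvB⟩⟩
      have hBUsum : ∑ v ∈ BU.biUnion (fun B => G.support B), ((G.degIn Conn v : ℕ) : ZMod 2)
          = ∑ B ∈ BU, (((G.negEdges B).card : ℕ) : ZMod 2) := by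
        rw [Finset.sum_biUnion]
        · refine Finset.sum_congr rfl fun B hBU2 => ?_
          rw [hBUdef, Finset.mem_filter] at hBU2
          have h1 : ∑ v ∈ G.support B, ((G.degIn Conn v : ℕ) : ZMod 2)
              = ((G.classDeg ℬ Conn (root B) : ℕ) : ZMod 2) := by
            unfold classDeg
            rw [Nat.cast_sum, hclassB B hBU2.1 (hrootmem B hBU2.1)]
          rw [h1, hConnpar, htgtB B hBU2.1 (hrootmem B hBU2.1)]
        · intro B1 h1 B2 h2 hne
          rw [hBUdef] at h1 h2
          exact hBdisj B1 (Finset.mem_of_mem_filter _ h1) B2 (Finset.mem_of_mem_filter _ h2) hne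
      have hodd' : ¬ Even (G.negEdges (G.compEdges (Finset.univ.erase b) x)).card := hodd
      have hcardeq : (G.negEdges (G.compEdges (Finset.univ.erase b) x)).card
          = ∑ B ∈ BU, (G.negEdges B).card := by
        rw [hnegcomp]
        refine Finset.card_biUnion ?_
        intro B1 h1 B2 h2 hne
        rw [hBUdef] at h1 h2
        exact Finset.disjoint_filter_filter (hBpairdisj B1 (Finset.mem_of_mem_filter _ h1)
          B2 (Finset.mem_of_mem_filter _ h2) hne)
      have hfinal : (((G.boundary Conn U).card : ℕ) : ZMod 2) = 1 := by
        rw [hsum1, hUsplit, hUblob, hBUsum, ← Nat.cast_sum, ← hcardeq]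
        rcases zmod2_eq01 (((G.negEdges (G.compEdges (Finset.univ.erase b) x)).card : ℕ) : ZMod 2)
          with h | h
        · exact absurd ((gb_cast_eq_zero_iff _).mp h) hodd'
        · exact h
      have hbConn : b ∈ Conn := by
        have hne0 : (G.boundary Conn U).card ≠ 0 := by
          intro h
          rw [h] at hfinal
          exact zero_ne_one (by rw [← hfinal]; rfl)
        obtain ⟨g, hg⟩ := Finset.card_pos.mp (Nat.pos_of_ne_zero hne0)
        obtain ⟨hgC, hgc⟩ := hbdmem.mp hg
        rw [← honly g hgc]
        exact hgC
      exact Finset.mem_union_right _ hbConn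
    by_cases hx0 : x ∈ U0
    · exact hswap U0 hU0 hx0
    · refine hswap (Finset.univ \ U0) ?_ (Finset.mem_sdiff.mpr ⟨Finset.mem_univ x, hx0⟩)
      have hbd : G.boundary Finset.univ (Finset.univ \ U0) = G.boundary Finset.univ U0 := by
        unfold boundary
        ext g
        rw [Finset.mem_filter, Finset.mem_filter, gb_cross_compl]
      rw [hbd, hU0]
  -- SSet
  have hSSet : ∀ e ∈ N, G.SSet e ⊆ S := by
    intro e heN f hf
    unfold SignedMultigraph.SSet at hf
    rcases Finset.mem_insert.mp hf with rfl | hf2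
    · exact Finset.mem_union_left _ (hNDl heN)
    · obtain ⟨hnef, U, hU⟩ := (Finset.mem_filter.mp hf2).2
      by_cases hfN : f ∈ N
      · exact Finset.mem_union_left _ (hNDl hfN)
      · have hfT : f ∈ T := by
          rw [hTdef, Finset.mem_sdiff]; exact ⟨Finset.mem_univ f, hfN⟩
        have hcrossf : G.crossesB U f = true := by
          have : f ∈ G.boundary Finset.univ U := by
            rw [hU]; exact Finset.mem_insert.mpr (Or.inr (Finset.mem_singleton_self f))
          exact (hbdmem.mp this).2
        have hcrosse : G.crossesB U e = true := by
          have : e ∈ G.boundary Finset.univ U := by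
            rw [hU]; exact Finset.mem_insert_self e _
          exact (hbdmem.mp this).2
        have honly : ∀ g : G.E, G.crossesB U g = true → g = e ∨ g = f := by
          intro g hg
          have : g ∈ G.boundary Finset.univ U := hbdmem.mpr ⟨Finset.mem_univ g, hg⟩
          rw [hU] at this
          rcases Finset.mem_insert.mp this with h | h
          · exact Or.inl h
          · exact Or.inr (Finset.mem_singleton.mp h)
        have hPbd : ∀ e' ∈ N, (G.boundary (Pe e') U) ⊆ {f} := by
          intro e' he' g hg
          obtain ⟨hgP, hgc⟩ := hbdmem.mp hg
          rcases honly g hgc with h1 | h1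
          · have : g ∈ N := by rw [h1]; exact heN
            exact absurd this (hTN (hPathT _ _ hgP))
          · exact Finset.mem_singleton.mpr h1
        have hPar : ∀ e' ∈ N, (((G.boundary (Pe e') U).card : ℕ) : ZMod 2) = G.gbCInd U e' := by
          intro e' _
          rw [G.gb_boundary_card]
          exact hPesum U e'
        have hmemPe : ∀ e' ∈ N, (f ∈ Pe e' ↔ G.crossesB U e' = true) := by
          intro e' he'
          constructor
          · intro hfP
            have hfb : f ∈ G.boundary (Pe e') U := hbdmem.mpr ⟨hfP, hcrossf⟩
            have h1 : G.boundary (Pe e') U = {f} := by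
              rcases Finset.subset_singleton_iff.mp (hPbd e' he') with h | h
              · rw [h] at hfb; exact absurd hfb (Finset.notMem_empty f)
              · exact h
            have h2 := hPar e' he'
            rw [h1, Finset.card_singleton, Nat.cast_one] at h2
            unfold gbCInd gbChi at h2
            by_cases hc : G.crossesB U e' = true
            · exact hc
            · rw [if_neg hc] at h2
              exact absurd h2 one_ne_zero
          · intro hcr
            have h2 := hPar e' he'
            have h3 : G.gbCInd U e' = 1 := by unfold gbCInd gbChi; rw [if_pos hcr]
            rw [h3] at h2
            have h4 : (G.boundary (Pe e') U).card ≤ 1 := by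
              have := Finset.card_le_card (hPbd e' he')
              rwa [Finset.card_singleton] at this
            have h5 : (G.boundary (Pe e') U).card = 1 := by
              interval_cases h : (G.boundary (Pe e') U).card
              · exact absurd h2 (by rw [Nat.cast_zero]; exact zero_ne_one)
              · rfl
            obtain ⟨g, hg⟩ := Finset.card_pos.mp (by omega : 0 < (G.boundary (Pe e') U).card)
            have := Finset.mem_singleton.mp (hPbd e' he' hg)
            subst this
            exact (hbdmem.mp hg).1
        have hNcross : ∀ e' ∈ N, (G.crossesB U e' = true ↔ e' = e) := by
          intro e' he'
          constructor
          · intro h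
            rcases honly e' h with h1 | h1
            · exact h1
            · have : f ∈ N := by rw [← h1]; exact he'
              exact absurd this hfN
          · rintro rfl; exact hcrosse
        have hfilt : N.filter (fun e' => f ∈ Pe e') = {e} := by
          ext e'
          rw [Finset.mem_filter, Finset.mem_singleton]
          constructor
          · rintro ⟨he', hfP⟩
            exact (hNcross e' he').mp ((hmemPe e' he').mp hfP)
          · intro h
            rw [h]
            exact ⟨heN, (hmemPe e heN).mpr hcrosse⟩
        have hfDT : f ∈ DT := by
          rw [hDTdef, Finset.mem_filter]
          refine ⟨hfT, ?_⟩
          rw [hfilt, Finset.card_singleton, Nat.cast_one]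
        exact Finset.mem_union_left _ (Finset.mem_union_right _ hfDT)
  refine ⟨S, ⟨ℬ, ?_, hBdisj, hcond3, hcond4, hcond5⟩, hBg, hSSet⟩
  intro B hB
  exact ⟨(hBsubDl B hB).trans Finset.subset_union_left, hBeul B hB⟩
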